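/- Let h = a/b with a, b natural numbers, 1 ≤ a ≤ b. Then for every n ≥ 1 there exists a natural number c with c < b such that the n-th iterate of the mod-1 reduced lifted Bernoulli shift map applied to 1/2 satisfies M̃_h^n(1/2) = c/b. In particular the orbit of the critical point 1/2 under M̃_h takes only finitely many values. -/

import Mathlib

open Filter MeasureTheory

/-- The lifted Bernoulli shift map `M_h`. -/
noncomputable def bernM (h x : ℝ) : ℝ :=
  if Int.fract x < 1/2 then (⌊x⌋ : ℝ) + 2 * Int.fract x + h
  else (⌊x⌋ : ℝ) + 2 * Int.fract x - 1 - h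

/-- The mod-1 reduced lifted Bernoulli shift map `M̃_h`. -/
noncomputable def bernMt (h x : ℝ) : ℝ := Int.fract (bernM h x)

lemma aux_fract (m : ℤ) (b : ℕ) (hb : 0 < b) :
    ∃ c : ℕ, c < b ∧ Int.fract ((m : ℝ) / (b : ℝ)) = (c : ℝ) / b := by
  have hb' : (0:ℤ) < (b:ℤ) := by exact_mod_cast hb
  refine ⟨(m % b).toNat, ?_, ?_⟩
  · have h1 := Int.emod_lt_of_pos m hb'
    have h2 := Int.emod_nonneg m hb'.ne'
    omega
  · rw [Int.fract_div_intCast_eq_div_intCast_mod]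
    congr 1
    have h2 := Int.emod_nonneg m hb'.ne'
    exact_mod_cast (Int.toNat_of_nonneg h2).symm

lemma step (a b : ℕ) (ha : 1 ≤ a) (hab : a ≤ b) (h : ℝ) (hh : h = (a : ℝ) / b)
    (c : ℕ) (hc : c < b) :
    ∃ c' : ℕ, c' < b ∧ bernMt h ((c : ℝ) / b) = (c' : ℝ) / b := by
  have hb : 0 < b := lt_of_le_of_lt (Nat.zero_le c) hc
  have hbR : (0:ℝ) < (b:ℝ) := by exact_mod_cast hb
  have hx0 : (0:ℝ) ≤ (c:ℝ)/b := by positivity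
  have hx1 : (c:ℝ)/b < 1 := by
    rw [div_lt_one hbR]; exact_mod_cast hc
  have hfr : Int.fract ((c:ℝ)/b) = (c:ℝ)/b := Int.fract_eq_self.2 ⟨hx0, hx1⟩
  have hfl : ⌊(c:ℝ)/b⌋ = 0 := by
    rw [Int.floor_eq_zero_iff]; exact ⟨hx0, hx1⟩
  unfold bernMt bernM
  rw [hfr, hfl]
  by_cases hlt : (c:ℝ)/b < 1/2
  · rw [if_pos hlt, hh]
    have : (((0:ℤ)):ℝ) + 2 * ((c:ℝ)/b) + (a:ℝ)/b = (((2*c+a : ℤ) : ℝ)) / b := by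
      push_cast; ring
    rw [this]
    exact aux_fract _ b hb
  · rw [if_neg hlt, hh]
    have : (((0:ℤ)):ℝ) + 2 * ((c:ℝ)/b) - 1 - (a:ℝ)/b = (((2*c - b - a : ℤ) : ℝ)) / b := by
      push_cast; field_simp; ring
    rw [this]
    exact aux_fract _ b hb

theorem stmt0 (a b : ℕ) (ha : 1 ≤ a) (hab : a ≤ b) (h : ℝ) (hh : h = (a : ℝ) / b)
    (n : ℕ) (hn : 1 ≤ n) :
    ∃ c : ℕ, c < b ∧ (bernMt h)^[n] (1/2) = (c : ℝ) / b := by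
  have hb : 0 < b := lt_of_lt_of_le ha hab
  induction n with
  | zero => omega
  | succ n ih =>
    rcases Nat.eq_zero_or_pos n with hn0 | hn1
    · subst hn0
      refine ⟨b - a, by omega, ?_⟩
      simp only [Nat.zero_add, Function.iterate_one]
      unfold bernMt bernM
      have hfr : Int.fract ((1:ℝ)/2) = 1/2 := Int.fract_eq_self.2 ⟨by norm_num, by norm_num⟩
      have hfl : ⌊(1:ℝ)/2⌋ = 0 := by norm_num [Int.floor_eq_zero_iff]
      rw [hfr, hfl, if_neg (by norm_num), hh]
      have : (((0:ℤ)):ℝ) + 2 * ((1:ℝ)/2) - 1 - (a:ℝ)/b = (((-a : ℤ) : ℝ)) / b := by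
        push_cast; ring
      rw [this, Int.fract_div_intCast_eq_div_intCast_mod]
      congr 1
      have hm : ((-a : ℤ) % b) = ((b : ℤ) - a) := by
        have h0 : ((b:ℤ) - a) % (b:ℤ) = (-a:ℤ) % b := by
          conv_rhs => rw [← Int.add_mul_emod_self_left (a := (-a:ℤ)) (b := (b:ℤ)) (c := 1)]
          ring_nf
        rw [← h0]
        exact Int.emod_eq_of_lt (sub_nonneg.2 (by exact_mod_cast hab))
          (sub_lt_self _ (by exact_mod_cast ha))
      rw [hm]; push_cast [Nat.cast_sub hab]; ring
    · obtain ⟨c, hc, heq⟩ := ih hn1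
      rw [Function.iterate_succ_apply', heq]
      exact step a b ha hab h hh c hc
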